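/- Let m > 1 be an odd integer. Then the class number of the imaginary quadratic field ℚ(√(1 - 2m³)) is divisible by 3. -/

import Mathlib

open NumberField Polynomial

set_option maxHeartbeats 4000000 in
/-- For any odd integer `m > 1`, the class number of the imaginary quadratic field
`ℚ(√(1 - 2m³))` is divisible by `3`. The field `ℚ(√(1 - 2m³))` is encoded as an
arbitrary number field `K` of degree `2` over `ℚ` containing a square root of `1 - 2m³`
(since `1 - 2m³ < 0` is not a perfect square, such a `K` is exactly `ℚ(√(1 - 2m³))`
up to isomorphism). -/
theorem class_number_dvd_three (m : ℤ) (hm : 1 < m) (hmodd : Odd m)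
    (K : Type) [Field K] [NumberField K] (hrank : Module.finrank ℚ K = 2)
    (α : K) (hα : α ^ 2 = ((1 - 2 * m ^ 3 : ℤ) : K)) :
    3 ∣ NumberField.classNumber K := by
  have hm3 : 3 ≤ m := by rcases hmodd with ⟨k, hk⟩; omega
  have hn_neg : (1 - 2*m^3 : ℤ) < 0 := by
    have h27 : (3:ℤ)^3 ≤ m ^ 3 := pow_le_pow_left₀ (by norm_num) hm3 3
    norm_num at h27; omega
  have hα' : α^2 = 1 - 2*(m:K)^3 := by rw [hα]; push_cast; ring
  -- uniqueness of coordinates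
  have huniq : ∀ u v : ℚ, (u : K) + (v : K) * α = 0 → u = 0 ∧ v = 0 := by
    intro u v h
    rcases eq_or_ne v 0 with hv | hv
    · subst hv
      simp at h
      exact ⟨by exact_mod_cast h, rfl⟩
    · exfalso
      have hsq : ((u^2 : ℚ) : K) = ((v^2 * ((1 - 2*m^3 : ℤ):ℚ) : ℚ) : K) := by
        push_cast
        linear_combination ((u:K) - (v:K) * α) * h + (v:K)^2 * hα'
      have h2 : (u^2 : ℚ) = v^2 * ((1 - 2*m^3 : ℤ):ℚ) := by exact_mod_cast hsq
      have h4 : (((1 - 2*m^3 : ℤ):ℚ)) < 0 := by exact_mod_cast hn_neg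
      have h5 : (0:ℚ) < v^2 := by positivity
      nlinarith [sq_nonneg u]
  have hco : ∀ P Q P' Q' : ℚ, (P:K) + (Q:K)*α = (P':K) + (Q':K)*α → P = P' ∧ Q = Q' := by
    intro P Q P' Q' h
    have := huniq (P-P') (Q-Q') (by push_cast; linear_combination h)
    exact ⟨by linarith [this.1], by linarith [this.2]⟩
  have hli : LinearIndependent ℚ ![(1:K), α] := by
    rw [LinearIndependent.pair_iff]
    intro s t hst
    refine huniq s t ?_
    rw [← hst, Rat.smul_def, Rat.smul_def]
    ring
  have hrepr : ∀ x : K, ∃ u v : ℚ, x = (u : K) + (v : K) * α := by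
    intro x
    set B := basisOfLinearIndependentOfCardEqFinrank hli (by simp [hrank]) with hB
    have hc : ⇑B = ![(1:K), α] := coe_basisOfLinearIndependentOfCardEqFinrank _ _
    refine ⟨B.repr x 0, B.repr x 1, ?_⟩
    have h := B.sum_repr x
    rw [Fin.sum_univ_two] at h
    rw [show B 0 = 1 by rw [hc]; rfl, show B 1 = α by rw [hc]; rfl,
      Rat.smul_def, Rat.smul_def] at h
    linear_combination -h
  -- trace and norm of integral elements are integers
  have hTN : ∀ (x : K) (u v : ℚ), IsIntegral ℤ x → x = (u:K) + (v:K) * α →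
      ∃ t e : ℤ, (t:ℚ) = 2*u ∧ (e:ℚ) = u^2 - ((1 - 2*m^3 : ℤ):ℚ)*v^2 := by
    intro x u v hx hxuv
    rcases eq_or_ne v 0 with hv | hv
    · subst hv
      rw [Rat.cast_zero, zero_mul, add_zero] at hxuv
      have hui : IsIntegral ℤ u := by
        rw [show ((u:K)) = algebraMap ℚ K u from (eq_ratCast (algebraMap ℚ K) u).symm] at hxuv
        exact (isIntegral_algebraMap_iff (algebraMap ℚ K).injective).mp (hxuv ▸ hx)
      obtain ⟨z, hz⟩ := IsIntegrallyClosed.isIntegral_iff.mp hui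
      refine ⟨2*z, z^2, ?_, ?_⟩ <;> push_cast <;>
        rw [show (algebraMap ℤ ℚ) z = (z:ℚ) from rfl] at hz <;> rw [hz] <;> ring
    · set p : ℚ[X] := X^2 - C (2*u) * X + C (u^2 - ((1 - 2*m^3 : ℤ):ℚ)*v^2) with hp_def
      have hpdeg : p.natDegree = 2 := by rw [hp_def]; compute_degree!
      have hpmonic : p.Monic := by
        apply Polynomial.monic_of_natDegree_le_of_coeff_eq_one 2
        · rw [hpdeg]
        · rw [hp_def]
          simp only [coeff_add, coeff_sub, coeff_C_mul, coeff_X_pow, coeff_C, coeff_X]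
          norm_num
      have hproot : aeval x p = 0 := by
        rw [hp_def]
        simp only [map_add, map_sub, map_mul, map_pow, aeval_X, aeval_C, eq_ratCast]
        rw [hxuv]
        push_cast
        linear_combination ((v:K))^2 * hα'
      have hxint : IsIntegral ℚ x := IsIntegral.of_finite ℚ x
      have hdvd : minpoly ℚ x ∣ p := minpoly.dvd ℚ x hproot
      have hdeg1 : (minpoly ℚ x).natDegree ≠ 1 := by
        intro h1
        have : (minpoly ℚ x).degree = 1 := by
          rw [degree_eq_natDegree (minpoly.ne_zero hxint), h1]; rfl
        obtain ⟨c, hc⟩ := minpoly.degree_eq_one_iff.mp this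
        rw [eq_ratCast (algebraMap ℚ K) c] at hc
        have : ((u - c : ℚ):K) + (v:K) * α = 0 := by
          push_cast
          rw [← hc] at hxuv
          linear_combination hxuv.symm
        exact hv (huniq _ _ this).2
      have hdeg2 : (minpoly ℚ x).natDegree = 2 := by
        have hle := Polynomial.natDegree_le_of_dvd hdvd hpmonic.ne_zero
        have hpos := minpoly.natDegree_pos hxint
        omega
      have hpeq : minpoly ℚ x = p :=
        Polynomial.eq_of_monic_of_associated (minpoly.monic hxint) hpmonic
          (associated_of_dvd_of_natDegree_le hdvd hpmonic.ne_zero (by omega))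
      have hmap := minpoly.isIntegrallyClosed_eq_field_fractions ℚ K hx
      rw [show (algebraMap K K) x = x from rfl] at hmap
      refine ⟨-((minpoly ℤ x).coeff 1), (minpoly ℤ x).coeff 0, ?_, ?_⟩
      · have := congrArg (fun q => q.coeff 1) (hpeq.symm.trans hmap)
        simp only [coeff_map, hp_def, coeff_add, coeff_sub, coeff_C_mul, coeff_X_pow,
          coeff_C, coeff_X] at this
        push_cast at this ⊢
        norm_num at this
        linarith [this]
      · have := congrArg (fun q => q.coeff 0) (hpeq.symm.trans hmap)
        simp only [coeff_map, hp_def, coeff_add, coeff_sub, coeff_C_mul, coeff_X_pow,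
          coeff_C, coeff_X] at this
        push_cast at this ⊢
        norm_num at this
        linarith [this]
  -- ring of integers elements
  have hai : IsIntegral ℤ α := by
    refine ⟨X^2 - C (1 - 2*m^3 : ℤ), Polynomial.monic_X_pow_sub_C _ (by norm_num), ?_⟩
    simp only [eval₂_sub, eval₂_pow, eval₂_X, eval₂_C]
    rw [show (algebraMap ℤ K) (1 - 2*m^3) = ((1 - 2*m^3 : ℤ) : K) from by simp]
    rw [hα]; ring
  set a : 𝓞 K := ⟨α, hai⟩ with ha_def
  have haK : (a : K) = α := rfl
  set M : 𝓞 K := (m : 𝓞 K) with hM_def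
  set yy : 𝓞 K := 1 + a with hyy_def
  set b : 𝓞 K := 1 - M^3 + a with hb_def
  set sb : 𝓞 K := 1 - M^3 - a with hsb_def
  have OKeq : ∀ z w : 𝓞 K, (z:K) = (w:K) → z = w := fun z w h => RingOfIntegers.ext_iff.mpr h
  have hMK : ((M : 𝓞 K) : K) = (m : K) := by simp [hM_def]
  have haa : a^2 = 1 - 2*M^3 := by
    apply OKeq
    push_cast [haK, hMK, map_intCast, map_ofNat]
    linear_combination hα'
  set I : Ideal (𝓞 K) := Ideal.span {M, yy} with hI_def
  have hxI : M ∈ I := Ideal.subset_span (by simp)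
  have hyI : yy ∈ I := Ideal.subset_span (by simp)
  have hmono : ∀ i j : ℕ, i + j = 6 → M^i * yy^j ∈ I^6 := by
    intro i j hij
    have h := Ideal.mul_mem_mul (Ideal.pow_mem_pow hxI i) (Ideal.pow_mem_pow hyI j)
    rwa [← pow_add, hij] at h
  have hb5 : b * M^5 ∈ I^6 := by
    have h : b * M^5 = M^5*yy^1 - M^2*(M^6*yy^0) := by ring
    rw [h]
    exact sub_mem (hmono 5 1 rfl) (Ideal.mul_mem_left _ _ (hmono 6 0 rfl))
  have hb43 : b * (4*M^3) ∈ I^6 := by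
    have h : b * (4*M^3) = M^3*yy^3 + 2*M*(M^5*yy^1) := by
      linear_combination (-3*M^3 - M^3*a) * haa
    rw [h]
    exact add_mem (hmono 3 3 rfl) (Ideal.mul_mem_left _ _ (hmono 5 1 rfl))
  have hb3 : b * M^3 ∈ I^6 := by
    obtain ⟨k, hk⟩ := hmodd
    have hz : (m^3:ℤ) = m^2*m^5 + (-(4*k^4+8*k^3+6*k^2+2*k))*(4*m^3) := by subst hk; ring
    have hzO := congrArg (fun z : ℤ => ((z : 𝓞 K))) hz
    push_cast at hzO
    have h : b * M^3 = M^2*(b*M^5) + ((-(4*k^4+8*k^3+6*k^2+2*k) : ℤ) : 𝓞 K)*(b*(4*M^3)) := by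
      push_cast
      linear_combination b * hzO
    rw [h]
    exact add_mem (Ideal.mul_mem_left _ _ hb5) (Ideal.mul_mem_left _ _ hb43)
  have hb1ma : b * (1 - a) ∈ I^6 := by
    have h : b * (1 - a) = M^6*yy^0 + b*M^3 := by
      linear_combination (-1 : 𝓞 K) * haa
    rw [h]
    exact add_mem (hmono 6 0 rfl) hb3
  have hb2 : (8*(2 - M^3)^2) * b ∈ I^6 := by
    have h : (8*(2 - M^3)^2) * b = M^0*yy^6 - (8*((1-a) - 2*(2-M^3)))*(b*(1-a)) := by
      linear_combination (-7 - 18*a - 16*a^2 - 6*a^3 - a^4 + 10*M^3 + 12*M^3*a + 2*M^3*a^2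
        - 4*M^6) * haa
    rw [h]
    exact sub_mem (hmono 0 6 rfl) (Ideal.mul_mem_left _ _ hb1ma)
  have hb32 : (32 : 𝓞 K) * b ∈ I^6 := by
    have h : (32 : 𝓞 K) * b = (8*(2 - M^3)^2)*b + (32 - 8*M^3)*(b*M^3) := by ring
    rw [h]
    exact add_mem hb2 (Ideal.mul_mem_left _ _ hb3)
  have hbmem : b ∈ I^6 := by
    have h32 : (32:ℤ) ∣ 1 - m^16 := by
      have hz : ∀ z : ZMod 32, (2*z+1)^16 = 1 := by decide
      obtain ⟨k, hk⟩ := hmodd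
      have : ((1 - m^16 : ℤ) : ZMod 32) = 0 := by
        push_cast
        rw [hk]
        push_cast
        rw [hz (k : ZMod 32)]
        ring
      exact_mod_cast (ZMod.intCast_zmod_eq_zero_iff_dvd _ 32).mp this
    obtain ⟨w, hw⟩ := h32
    have hwO := congrArg (fun z : ℤ => ((z : 𝓞 K))) hw
    push_cast at hwO
    have h : b = ((w:ℤ) : 𝓞 K)*((32:𝓞 K)*b) + M^13*(b*M^3) := by
      linear_combination b * hwO
    rw [h]
    exact add_mem (Ideal.mul_mem_left _ _ hb32) (Ideal.mul_mem_left _ _ hb3)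
  have hsup : Ideal.span {b} ≤ I^6 := by
    rw [Ideal.span_le, Set.singleton_subset_iff]
    exact hbmem
  -- the reverse inclusion
  set S : Ideal (𝓞 K) := Ideal.span {M^2, M*yy, b} with hS_def
  have hI2S : I^2 ≤ S := by
    rw [pow_two]
    refine Ideal.mul_le.mpr ?_
    intro r hr s hs
    obtain ⟨u1, v1, h1⟩ := Ideal.mem_span_pair.mp hr
    obtain ⟨u2, v2, h2⟩ := Ideal.mem_span_pair.mp hs
    have hS1 : M^2 ∈ S := Ideal.subset_span (by simp)
    have hS2 : M*yy ∈ S := Ideal.subset_span (by simp)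
    have hS3 : b ∈ S := Ideal.subset_span (by simp)
    have h : r*s = (u1*u2)*M^2 + (u1*v2+v1*u2)*(M*yy) + (2*(v1*v2))*b := by
      rw [← h1, ← h2]
      linear_combination (v1*v2) * haa
    rw [h]
    exact add_mem (add_mem (Ideal.mul_mem_left _ _ hS1) (Ideal.mul_mem_left _ _ hS2))
      (Ideal.mul_mem_left _ _ hS3)
  have hdec : ∀ z ∈ S, ∃ c d e : 𝓞 K, z = c*M^2 + d*(M*yy) + e*b := by
    intro z hz
    rw [hS_def] at hz
    obtain ⟨c, z1, hz1, hzeq⟩ := Submodule.mem_span_insert.mp hz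
    obtain ⟨d, z2, hz2, hzeq2⟩ := Submodule.mem_span_insert.mp hz1
    obtain ⟨e, hz3⟩ := Ideal.mem_span_singleton.mp hz2
    refine ⟨c, d, e, ?_⟩
    rw [hzeq, hzeq2, hz3]
    simp only [smul_eq_mul]
    ring
  have hS3b : (S*S)*S ≤ Ideal.span {b} := by
    refine Ideal.mul_le.mpr ?_
    intro r hr s hs
    refine Submodule.mul_induction_on hr ?_ ?_
    · intro p hp q hq
      obtain ⟨c1,d1,e1,h1⟩ := hdec p hp
      obtain ⟨c2,d2,e2,h2⟩ := hdec q hq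
      obtain ⟨c3,d3,e3,h3⟩ := hdec s hs
      rw [Ideal.mem_span_singleton, h1, h2, h3]
      refine ⟨c1*c2*c3*sb + (c1*c2*d3+c1*d2*c3+d1*c2*c3)*(M^2*(1-a))
        + (c1*d2*d3+d1*c2*d3+d1*d2*c3)*(2*M^4) + d1*d2*d3*(2*M^3*(1+a))
        + e1*(c2*M^2+d2*(M*yy)+e2*b)*(c3*M^2+d3*(M*yy)+e3*b)
        + (c1*M^2+d1*(M*yy))*e2*(c3*M^2+d3*(M*yy)+e3*b)
        + (c1*M^2+d1*(M*yy))*(c2*M^2+d2*(M*yy))*e3, ?_⟩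
      linear_combination (c1*c2*c3 + M^2*(c2*c3*d1 + c1*c3*d2 + c1*c2*d3) + M^3*d1*d2*d3
        + M^3*a*d1*d2*d3 + M^4*(c3*d1*d2 + c2*d1*d3 + c1*d2*d3)) * haa
    · intro x y hx hy
      rw [add_mul]
      exact add_mem hx hy
  have hI6eq : I^6 = Ideal.span {b} := by
    refine le_antisymm ?_ hsup
    have e2 : (I^2)^3 ≤ S^3 := Ideal.pow_right_mono hI2S 3
    have e3 : S^3 = (S*S)*S := by ring
    rw [show I^6 = (I^2)^3 from by rw [← pow_mul]]
    exact le_trans e2 (le_of_eq_of_le e3 hS3b)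
  -- the unit cube-root lemma
  have hcube : ∀ ε : (𝓞 K)ˣ, ∃ δ : (𝓞 K)ˣ, δ^3 = ε := by
    intro ε
    obtain ⟨u, v, huv⟩ := hrepr ((ε : 𝓞 K) : K)
    obtain ⟨u', v', huv'⟩ := hrepr (((ε⁻¹ : (𝓞 K)ˣ) : 𝓞 K) : K)
    obtain ⟨t, e, ht, he⟩ := hTN _ u v (RingOfIntegers.isIntegral_coe _) huv
    obtain ⟨t', e', ht', he'⟩ := hTN _ u' v' (RingOfIntegers.isIntegral_coe _) huv'
    set nq : ℚ := ((1 - 2*m^3 : ℤ) : ℚ) with hnq_def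
    have hnqv : nq = 1 - 2*(m:ℚ)^3 := by rw [hnq_def]; push_cast; ring
    have hnq_neg : nq < 0 := by
      rw [hnq_def]; exact_mod_cast hn_neg
    have hprod : ((ε : 𝓞 K) : K) * (((ε⁻¹ : (𝓞 K)ˣ) : 𝓞 K) : K) = 1 := by
      rw [← map_mul, Units.mul_inv, map_one]
    have hPQ := hco (u*u' + nq*(v*v')) (u*v' + v*u') 1 0 (by
      push_cast [hnqv]
      linear_combination hprod - ((u':K) + (v':K)*α)*huv - (((ε : 𝓞 K) : K))*huv'
        - (v:K)*(v':K)*hα')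
    have hee : e * e' = 1 := by
      have h1 := hPQ.1
      have h2 := hPQ.2
      have hq : (e:ℚ) * (e':ℚ) = 1 := by
        rw [he, he']
        linear_combination (u*u' + nq*(v*v') + 1)*h1 - nq*(u*v' + v*u')*h2
      exact_mod_cast hq
    have hepos : (0:ℚ) ≤ (e:ℚ) := by
      rw [he]
      nlinarith [sq_nonneg u, sq_nonneg v, hnq_neg]
    have he1 : e = 1 := by
      rcases Int.mul_eq_one_iff_eq_one_or_neg_one.mp hee with ⟨h1, _⟩ | ⟨h1, _⟩
      · exact h1
      · exfalso; rw [h1] at hepos; norm_num at hepos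
    have heq : u^2 - nq*v^2 = 1 := by
      rw [he1] at he
      push_cast at he
      linear_combination -he
    have ht2 : t^2 ≤ 4 := by
      have h4 : nq*v^2 ≤ 0 := by nlinarith [hnq_neg, sq_nonneg v]
      have hq : ((t:ℚ))^2 - 4 = 4*(nq*v^2) := by
        rw [ht]; linear_combination 4*heq
      have : ((t:ℚ))^2 ≤ 4 := by linarith
      exact_mod_cast this
    have hno : u^2 ≠ (1:ℚ)/4 := by
      intro hu2
      have heq' := heq
      rw [hnqv] at heq'
      have hv2 : (2*(m:ℚ)^3 - 1)*v^2 = 3/4 := by linear_combination heq' - hu2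
      set z : ℚ := (2*(m:ℚ)^3 - 1)*(2*v) with hz_def
      have hz2 : z^2 = ((3*(2*m^3 - 1) : ℤ) : ℚ) := by
        rw [hz_def]; push_cast
        linear_combination 4*(2*(m:ℚ)^3-1)*hv2
      have hzint : IsIntegral ℤ z := by
        refine ⟨Polynomial.X^2 - Polynomial.C (3*(2*m^3 - 1) : ℤ),
          Polynomial.monic_X_pow_sub_C _ (by norm_num), ?_⟩
        simp only [Polynomial.eval₂_sub, Polynomial.eval₂_pow, Polynomial.eval₂_X,
          Polynomial.eval₂_C]
        rw [show (algebraMap ℤ ℚ) (3*(2*m^3-1)) = ((3*(2*m^3-1) : ℤ) : ℚ) from by simp]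
        rw [hz2]; ring
      obtain ⟨w, hw⟩ := IsIntegrallyClosed.isIntegral_iff.mp hzint
      rw [show (algebraMap ℤ ℚ) w = ((w:ℚ)) from rfl] at hw
      have hw2 : w^2 = 3*(2*m^3 - 1) := by
        have : ((w:ℚ))^2 = ((3*(2*m^3-1) : ℤ) : ℚ) := by rw [hw, hz2]
        exact_mod_cast this
      have h3w : (3:ℤ) ∣ w := by
        refine Int.prime_three.dvd_of_dvd_pow (n := 2) ⟨2*m^3 - 1, by linarith⟩
      obtain ⟨w', hw'⟩ := h3w
      have hw'2 : 3*w'^2 = 2*m^3 - 1 := by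
        rw [hw'] at hw2; nlinarith [hw2]
      have hmod : ∀ x y : ZMod 9, 3*x^2 ≠ 2*y^3 - 1 := by decide
      have hcast := congrArg (fun z : ℤ => (z : ZMod 9)) hw'2
      push_cast at hcast
      exact hmod (w' : ZMod 9) (m : ZMod 9) hcast
    have hvzero : ∀ hnn : nq*v^2 = 0, v = 0 := by
      intro h
      rcases mul_eq_zero.mp h with h1 | h1
      · exact absurd h1 (ne_of_lt hnq_neg)
      · exact sq_eq_zero_iff.mp h1
    obtain ⟨hl, hr⟩ : -2 ≤ t ∧ t ≤ 2 := by constructor <;> nlinarith [ht2]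
    have htq := ht
    interval_cases t
    · -- t = -2 : ε = -1
      have hu : u = -1 := by
        have h : ((-2 : ℤ):ℚ) = 2*u := htq
        push_cast at h; linarith
      rw [hu] at heq
      have hv : v = 0 := hvzero (by linear_combination -heq)
      have hεval : ((ε : 𝓞 K) : K) = (((-1 : 𝓞 K)) : K) := by
        rw [huv, hu, hv]; push_cast; ring
      have hh : (ε : 𝓞 K) = -1 := OKeq _ _ hεval
      refine ⟨-1, Units.ext ?_⟩
      rw [Units.val_pow_eq_pow_val, Units.val_neg, Units.val_one, hh]
      ring
    · -- t = -1 : impossible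
      exfalso
      apply hno
      have h : ((-1 : ℤ):ℚ) = 2*u := htq
      push_cast at h; nlinarith [h]
    · -- t = 0 : ε^2 = -1, δ = -ε
      have hu : u = 0 := by
        have h : ((0 : ℤ):ℚ) = 2*u := htq
        push_cast at h; linarith
      rw [hu] at heq
      have hnn : (1 - 2*(m:ℚ)^3)*v^2 = -1 := by
        rw [← hnqv]; linear_combination -heq
      have hnnK := congrArg (fun q : ℚ => (q:K)) hnn
      push_cast at hnnK
      have hε2c : ((ε:𝓞 K))^2 = -1 := by
        apply OKeq
        rw [show (((ε:𝓞 K)^2 : 𝓞 K) : K) = ((ε:𝓞 K):K)^2 from by push_cast; ring]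
        rw [huv, hu]
        push_cast
        linear_combination (v:K)^2*hα' + hnnK
      refine ⟨-ε, Units.ext ?_⟩
      rw [Units.val_pow_eq_pow_val, Units.val_neg]
      linear_combination (-((ε:𝓞 K)))*hε2c
    · -- t = 1 : impossible
      exfalso
      apply hno
      have h : ((1 : ℤ):ℚ) = 2*u := htq
      push_cast at h; nlinarith [h]
    · -- t = 2 : ε = 1
      have hu : u = 1 := by
        have h : ((2 : ℤ):ℚ) = 2*u := htq
        push_cast at h; linarith
      rw [hu] at heq
      have hv : v = 0 := hvzero (by linear_combination -heq)
      have hεval : ((ε : 𝓞 K) : K) = (((1 : 𝓞 K)) : K) := by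
        rw [huv, hu, hv]; push_cast; ring
      have hh : (ε : 𝓞 K) = 1 := OKeq _ _ hεval
      refine ⟨1, Units.ext ?_⟩
      rw [Units.val_pow_eq_pow_val, Units.val_one, hh]
      ring
  -- class group wrap-up
  haveI : Fact (Nat.Prime 3) := ⟨by norm_num⟩
  have hMne : (M : 𝓞 K) ≠ 0 := by
    rw [hM_def]
    exact_mod_cast (Int.cast_ne_zero (α := 𝓞 K)).mpr (by omega : m ≠ 0)
  have hIne : I ≠ ⊥ := by
    intro h
    rw [h] at hxI
    exact hMne (by simpa using hxI)
  have hI2mem : I^2 ∈ nonZeroDivisors (Ideal (𝓞 K)) := by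
    rw [mem_nonZeroDivisors_iff_ne_zero]
    exact pow_ne_zero 2 (by simpa [Ideal.zero_eq_bot] using hIne)
  set g := ClassGroup.mk0 (⟨I^2, hI2mem⟩ : (nonZeroDivisors (Ideal (𝓞 K)))) with hg_def
  have hg3 : g^3 = 1 := by
    rw [hg_def, ← map_pow]
    have hI6mem : I^6 ∈ nonZeroDivisors (Ideal (𝓞 K)) := by
      rw [mem_nonZeroDivisors_iff_ne_zero]
      exact pow_ne_zero 6 (by simpa [Ideal.zero_eq_bot] using hIne)
    have hsub : ((⟨I^2, hI2mem⟩ : (nonZeroDivisors (Ideal (𝓞 K))))^3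
        : (nonZeroDivisors (Ideal (𝓞 K)))) = ⟨I^6, hI6mem⟩ := by
      apply Subtype.ext
      show (I^2)^3 = I^6
      rw [← pow_mul]
    rw [hsub, ClassGroup.mk0_eq_one_iff]
    rw [hI6eq]
    exact ⟨⟨b, rfl⟩⟩
  have hg_ne : g ≠ 1 := by
    intro h1
    rw [hg_def, ClassGroup.mk0_eq_one_iff] at h1
    obtain ⟨γ, hγ⟩ := h1.principal
    -- I^2 = span {γ}, hence span {γ^3} = span {b}
    have h6 : Ideal.span {γ^3} = Ideal.span {b} := by
      calc Ideal.span {γ^3} = (Ideal.span {γ})^3 := (Ideal.span_singleton_pow γ 3).symm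
        _ = (I^2)^3 := by rw [hγ]
        _ = I^6 := by rw [← pow_mul]
        _ = Ideal.span {b} := hI6eq
    obtain ⟨ε, hε⟩ := Ideal.span_singleton_eq_span_singleton.mp h6
    obtain ⟨δ, hδ⟩ := hcube ε
    set γ' : 𝓞 K := γ * (δ : 𝓞 K) with hγ'_def
    have hγ'3 : γ'^3 = b := by
      rw [hγ'_def]
      calc (γ * (δ : 𝓞 K))^3 = γ^3 * ((δ : 𝓞 K))^3 := by ring
        _ = γ^3 * ((δ^3 : (𝓞 K)ˣ) : 𝓞 K) := by rw [Units.val_pow_eq_pow_val]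
        _ = γ^3 * (ε : 𝓞 K) := by rw [hδ]
        _ = b := hε
    -- pass to K
    have hg3K : ((γ' : 𝓞 K) : K)^3 = 1 - (m:K)^3 + α := by
      have hc := congrArg (fun z : 𝓞 K => (z : K)) hγ'3
      rw [show ((γ'^3 : 𝓞 K) : K) = ((γ' : 𝓞 K) : K)^3 from by push_cast; ring] at hc
      rw [hc, hb_def]
      push_cast [haK, hMK, map_intCast, map_ofNat]
      ring
    obtain ⟨u, v, huv⟩ := hrepr ((γ' : 𝓞 K) : K)
    obtain ⟨t, e, ht, he⟩ := hTN _ u v (RingOfIntegers.isIntegral_coe _) huv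
    set nq : ℚ := ((1 - 2*m^3 : ℤ) : ℚ) with hnq_def
    have hnqv : nq = 1 - 2*(m:ℚ)^3 := by rw [hnq_def]; push_cast; ring
    have hGuv3 : ((u:K) + (v:K)*α)^3 = 1 - (m:K)^3 + α := by
      rw [← huv]; exact hg3K
    have hcoeq := hco (u^3 + 3*nq*u*v^2) (3*u^2*v + nq*v^3) (1 - (m:ℚ)^3) 1 (by
      push_cast [hnqv]
      linear_combination hGuv3 - (3*u*(v:K)^2 + (v:K)^3*α)*hα')
    have hEq1 : u^3 + 3*nq*u*v^2 = 1 - (m:ℚ)^3 := hcoeq.1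
    have hEq2 : 3*u^2*v + nq*v^3 = 1 := hcoeq.2
    -- norm is m^2
    have hE3 : (e:ℚ)^3 = ((m:ℚ)^2)^3 := by
      rw [he]
      rw [hnqv] at hEq1 hEq2 ⊢
      linear_combination ((u^3 + 3*(1 - 2*(m:ℚ)^3)*u*v^2) + (1-(m:ℚ)^3))*hEq1
        - (1 - 2*(m:ℚ)^3)*((3*u^2*v + (1 - 2*(m:ℚ)^3)*v^3) + 1)*hEq2
    have hEm : e = m^2 := by
      have h1 : e^3 = (m^2)^3 := by exact_mod_cast hE3
      nlinarith [h1, sq_nonneg (e - m^2), sq_nonneg (e + m^2), sq_nonneg e, sq_nonneg m]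
    have he2 : nq*v^2 = u^2 - (m:ℚ)^2 := by
      rw [hEm] at he
      push_cast at he
      linarith
    -- the integral equation t^3 - 3 m^2 t + 2 m^3 - 2 = 0
    have hq : ((t:ℚ))^3 - 3*(m:ℚ)^2*(t:ℚ) + 2*(m:ℚ)^3 - 2 = 0 := by
      linear_combination ((t:ℚ)^2 + 2*u*(t:ℚ) + 4*u^2 - 3*(m:ℚ)^2)*ht + 2*hEq1 - 6*u*he2
    have ht3 : t^3 - 3*m^2*t + 2*m^3 - 2 = 0 := by exact_mod_cast hq
    have key : (t - m)^2*(t + 2*m) = 2 := by linear_combination ht3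
    rcases eq_or_ne t m with hEq | hNe
    · rw [hEq] at key; simp at key
    · have h1 : 1 ≤ (t-m)^2 := by
        rcases lt_trichotomy t m with h | h | h
        · nlinarith
        · exact absurd h hNe
        · nlinarith
      have h2 : 0 < t + 2*m := by
        by_contra hc
        push_neg at hc
        have : (t-m)^2*(t+2*m) ≤ 0 := mul_nonpos_iff.mpr (Or.inl ⟨sq_nonneg _, hc⟩)
        omega
      have h3 : t + 2*m ≤ 2 := by nlinarith [mul_le_mul_of_nonneg_right h1 (le_of_lt h2)]
      have h4 : (t - m)^2 ≥ (3*m - 2)^2 := by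
        nlinarith [mul_nonneg (by linarith : (0:ℤ) ≤ 4*m - 2 - t) (by linarith : (0:ℤ) ≤ 2 - t - 2*m)]
      nlinarith [mul_le_mul_of_nonneg_right h4 (le_of_lt h2), h2, hm3]
  have horder : orderOf g = 3 := orderOf_eq_prime hg3 hg_ne
  rw [NumberField.classNumber, ← horder]
  exact orderOf_dvd_card
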